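/- Let A be an n×n rational matrix, X₀ ∈ ℚⁿ, and C = [1, 0, ..., 0] (row vector of length n). Define φ₁(A) as the 2n×2n non-negative matrix replacing each entry A_{ij} by the block [[max(A_{ij},0), max(-A_{ij},0)],[max(-A_{ij},0), max(A_{ij},0)]], and φ₂(X₀) ∈ ℚ²ⁿ the vector replacing each entry X₀(i) by the pair (X₀(i), 0). Let C'' = [1, -1, 0, ..., 0] of length 2n. Then C'' · exp(φ₁(A)·t) · φ₂(X₀) = C · exp(A·t) · X₀ for all real t. -/

import Mathlib

open Matrix NormedSpace

/-- The doubling map `φ₁` on rational matrices. -/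
def phi1 {n : ℕ} (A : Matrix (Fin n) (Fin n) ℚ) :
    Matrix (Fin n × Fin 2) (Fin n × Fin 2) ℚ :=
  fun p q => if p.2 = q.2 then max (A p.1 q.1) 0 else max (-(A p.1 q.1)) 0

/-- The doubling map `φ₂` on vectors: `X i` becomes the pair `(X i, 0)`. -/
def phi2 {n : ℕ} (X : Fin n → ℚ) : Fin n × Fin 2 → ℚ :=
  fun p => if p.2 = 0 then X p.1 else 0


attribute [local instance] Matrix.linftyOpNormedRing Matrix.linftyOpNormedAlgebra

private theorem intertwine {m m' : Type*} [Fintype m] [DecidableEq m] [Fintype m'] [DecidableEq m']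
    (P : Matrix m m' ℝ) (X : Matrix m' m' ℝ) (Y : Matrix m m ℝ)
    (h : P * X = Y * P) : P * exp X = exp Y * P := by
  have hk : ∀ k : ℕ, P * X ^ k = Y ^ k * P := by
    intro k
    induction k with
    | zero => simp
    | succ k ih => rw [pow_succ, pow_succ, ← Matrix.mul_assoc, ih, Matrix.mul_assoc, h,
        ← Matrix.mul_assoc]
  let L : Matrix m' m' ℝ →L[ℝ] Matrix m m' ℝ :=
    LinearMap.toContinuousLinearMap
    { toFun := fun Z => P * Z
      map_add' := fun a b => Matrix.mul_add P a b
      map_smul' := fun c Z => (Matrix.mul_smul P c Z) }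
  let R : Matrix m m ℝ →L[ℝ] Matrix m m' ℝ :=
    LinearMap.toContinuousLinearMap
    { toFun := fun Z => Z * P
      map_add' := fun a b => Matrix.add_mul a b P
      map_smul' := fun c Z => (Matrix.smul_mul c Z P) }
  have h1 : P * exp X = L (exp X) := rfl
  have h2 : exp Y * P = R (exp Y) := rfl
  rw [h1, h2, exp_eq_tsum ℝ, exp_eq_tsum ℝ,
    L.map_tsum (expSeries_summable' (𝕂 := ℝ) X),
    R.map_tsum (expSeries_summable' (𝕂 := ℝ) Y)]
  congr 1
  funext k
  rw [_root_.map_smul, _root_.map_smul]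
  exact congrArg _ (hk k)

/-- The projection matrix `v ↦ (i ↦ v (i,0) - v (i,1))`. -/
def Pmat (n : ℕ) : Matrix (Fin n) (Fin n × Fin 2) ℝ :=
  fun i q => if q.1 = i then (if q.2 = 0 then 1 else -1) else 0

theorem Pmat_intertwine {n : ℕ} (A : Matrix (Fin n) (Fin n) ℚ) :
    Pmat n * (phi1 A).map ((↑) : ℚ → ℝ) = A.map ((↑) : ℚ → ℝ) * Pmat n := by
  ext i q
  obtain ⟨j, t⟩ := q
  rw [Matrix.mul_apply, Matrix.mul_apply]
  simp only [Pmat, Fintype.sum_prod_type, Fin.sum_univ_two, Matrix.map_apply, phi1]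
  simp only [ite_mul, mul_ite, one_mul, zero_mul, mul_one, mul_neg, mul_zero, neg_mul]
  rw [Finset.sum_add_distrib]
  simp only [Finset.sum_ite_eq', Finset.sum_ite_eq, Finset.mem_univ, if_true]
  fin_cases t <;> push_cast <;> simp [max_def] <;> split_ifs <;>
    first
      | linarith
      | (have h3 : A i j = 0 := le_antisymm ‹_› ‹_›; simp [h3])

/-- `C'' · exp(φ₁(A) t) · φ₂(X₀) = C · exp(A t) · X₀` where `C = [1,0,…,0]` and
`C'' = [1,-1,0,…,0]`. -/
theorem doubling_preserves_output
    {n : ℕ} [NeZero n] (A : Matrix (Fin n) (Fin n) ℚ) (X0 : Fin n → ℚ)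
    (C : Fin n → ℝ) (hC : C = fun j => if j = 0 then 1 else 0)
    (C'' : Fin n × Fin 2 → ℝ)
    (hC'' : C'' = fun p => if p.1 = 0 then (if p.2 = 0 then 1 else -1) else 0) :
    ∀ t : ℝ,
      C'' ⬝ᵥ (NormedSpace.exp (t • (phi1 A).map ((↑) : ℚ → ℝ)) *ᵥ
          fun p => ((phi2 X0 p : ℚ) : ℝ)) =
      C ⬝ᵥ (NormedSpace.exp (t • A.map ((↑) : ℚ → ℝ)) *ᵥ fun i => ((X0 i : ℚ) : ℝ)) := by
  intro t
  set B := (phi1 A).map ((↑) : ℚ → ℝ) with hB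
  set A' := A.map ((↑) : ℚ → ℝ) with hA'
  have hcomm : Pmat n * (t • B) = (t • A') * Pmat n := by
    rw [Matrix.mul_smul, Matrix.smul_mul, Pmat_intertwine]
  have key := intertwine (Pmat n) (t • B) (t • A') hcomm
  set E2 := NormedSpace.exp (t • B)
  set E1 := NormedSpace.exp (t • A')
  have hC''P : C'' = Pmat n 0 := by
    rw [hC'']; funext p; simp [Pmat]
  have hPv : Pmat n *ᵥ (fun p => ((phi2 X0 p : ℚ) : ℝ)) = fun i => ((X0 i : ℚ) : ℝ) := by
    funext i
    simp [Pmat, Matrix.mulVec, dotProduct, Fintype.sum_prod_type, Fin.sum_univ_two,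
      phi2, Finset.sum_ite_eq', Finset.sum_ite_eq]
  rw [hC''P, Matrix.dotProduct_mulVec]
  have hrow : (Pmat n 0) ᵥ* E2 = (E1 * Pmat n) 0 := by
    rw [← key]; funext q; rw [Matrix.mul_apply, Matrix.vecMul, dotProduct]
  rw [hrow]
  have hrow2 : (E1 * Pmat n) 0 = (E1 0) ᵥ* Pmat n := by
    funext q; rw [Matrix.mul_apply, Matrix.vecMul, dotProduct]
  rw [hrow2, ← Matrix.dotProduct_mulVec, hPv, hC]
  rw [dotProduct, dotProduct]
  simp only [ite_mul, one_mul, zero_mul, Finset.sum_ite_eq, Finset.mem_univ, if_true]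
  simp [Matrix.mulVec, dotProduct]
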